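/- Let g ∈ ℝⁿ with g ≠ 0, let σ > 0, f_k ∈ ℝ, τ > 0, and let h ∈ ℝⁿ be any vector (representing g(x_k − τ g_k)). Define the model φ̄₂(α) = f_k − α ‖g‖² + (1/2) α² |gᵀ(h − g)|/τ + (1/3) σ α³ ‖g‖³. Then the stepsize ᾱ = 2τ‖g‖² / (√(|gᵀ(h − g)|² + 4τ²σ‖g‖⁵) + |gᵀ(h − g)|) is positive and is the strict global minimizer of φ̄₂ over (0, ∞). (This establishes the first approximately optimal stepsize formula in (18), used when sᵀy ≤ 0.) -/

import Mathlib

open scoped RealInnerProductSpace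

/-- The first approximately optimal stepsize formula in (18) (used when
`sᵀy ≤ 0`): with the finite-difference curvature estimate `|gᵀ(h − g)|/τ`,
the stepsize `ᾱ = 2τ‖g‖²/(√(|gᵀ(h − g)|² + 4τ²σ‖g‖⁵) + |gᵀ(h − g)|)` is
positive and is the strict global minimizer over `(0, ∞)` of
`φ̄₂(α) = f_k − α‖g‖² + (1/2)α²|gᵀ(h − g)|/τ + (σ/3)α³‖g‖³`. -/
theorem stmt10 (n : ℕ) (g h : EuclideanSpace ℝ (Fin n)) (hg : g ≠ 0)
    (σ fk τ : ℝ) (hσ : 0 < σ) (hτ : 0 < τ)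
    (φ : ℝ → ℝ)
    (hφ : ∀ α, φ α = fk - α * ‖g‖ ^ 2 + 1 / 2 * α ^ 2 * (|⟪g, h - g⟫| / τ)
      + σ / 3 * α ^ 3 * ‖g‖ ^ 3)
    (αb : ℝ)
    (hαb : αb = 2 * τ * ‖g‖ ^ 2 /
      (Real.sqrt (|⟪g, h - g⟫| ^ 2 + 4 * τ ^ 2 * σ * ‖g‖ ^ 5) + |⟪g, h - g⟫|)) :
    0 < αb ∧ ∀ α : ℝ, 0 < α → α ≠ αb → φ αb < φ α := by
  set p : ℝ := |⟪g, h - g⟫| with hp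
  have hgpos : (0:ℝ) < ‖g‖ := norm_pos_iff.mpr hg
  have hp0 : 0 ≤ p := abs_nonneg _
  have hargpos : 0 < p ^ 2 + 4 * τ ^ 2 * σ * ‖g‖ ^ 5 := by positivity
  set S : ℝ := Real.sqrt (p ^ 2 + 4 * τ ^ 2 * σ * ‖g‖ ^ 5) with hS
  have hS2 : S ^ 2 = p ^ 2 + 4 * τ ^ 2 * σ * ‖g‖ ^ 5 :=
    Real.sq_sqrt hargpos.le
  have hSpos : 0 < S := Real.sqrt_pos.mpr hargpos
  have hden : 0 < S + p := by linarith
  have hαbpos : 0 < αb := by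
    rw [hαb]; positivity
  -- key quadratic identity: σ‖g‖³ αb² + (p/τ) αb = ‖g‖²
  have hquad : σ * ‖g‖ ^ 3 * αb ^ 2 + (p / τ) * αb = ‖g‖ ^ 2 := by
    rw [hαb]
    field_simp
    linear_combination (-1) * hS2
  refine ⟨hαbpos, fun α hα hne => ?_⟩
  rw [hφ, hφ]
  have hne2 : (0:ℝ) < (α - αb) ^ 2 := by
    have : α - αb ≠ 0 := sub_ne_zero.mpr hne
    positivity
  have hfac : fk - α * ‖g‖ ^ 2 + 1 / 2 * α ^ 2 * (p / τ) + σ / 3 * α ^ 3 * ‖g‖ ^ 3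
      - (fk - αb * ‖g‖ ^ 2 + 1 / 2 * αb ^ 2 * (p / τ) + σ / 3 * αb ^ 3 * ‖g‖ ^ 3)
      = (α - αb) ^ 2 * (p / (2 * τ) + σ * ‖g‖ ^ 3 * (α + 2 * αb) / 3) := by
    have hτ' : τ ≠ 0 := hτ.ne'
    field_simp at hquad ⊢
    nlinarith [hquad]
  have hpos2 : 0 < p / (2 * τ) + σ * ‖g‖ ^ 3 * (α + 2 * αb) / 3 := by
    have h1 : 0 ≤ p / (2 * τ) := by positivity
    have h2 : 0 < σ * ‖g‖ ^ 3 * (α + 2 * αb) / 3 := by positivity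
    linarith
  nlinarith [mul_pos hne2 hpos2, hfac]
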